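/- For any set of nodes Q in an imprecise terrain T there exists a single realization R̄ ∈ R_T (the canonical realization) such that WS(R̄,Q) equals the potential watershed PoWS(Q) = ⋃_{R∈R_T} WS(R,Q). -/

import Mathlib

open scoped Classical
open Set

/-- An imprecise terrain: a finite geometric graph with nodes in the plane,
each node carrying an elevation interval `[low v, high v]`. -/
structure ImpTerrain (V : Type) [Fintype V] [DecidableEq V] where
  pos : V → ℝ × ℝ
  posInj : Function.Injective pos
  adj : V → V → Prop
  adj_symm : ∀ u v, adj u v → adj v u
  adj_irrefl : ∀ v, ¬ adj v v
  low : V → ℝ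
  high : V → ℝ

namespace ImpTerrain

variable {V : Type} [Fintype V] [DecidableEq V]

/-- A realization assigns to each node an elevation within its interval. -/
def IsRealization (T : ImpTerrain V) (R : V → ℝ) : Prop :=
  ∀ v, T.low v ≤ R v ∧ R v ≤ T.high v

/-- Horizontal (plane) distance between two nodes. -/
noncomputable def hdist (T : ImpTerrain V) (u v : V) : ℝ := dist (T.pos u) (T.pos v)

/-- Slope (steepness of descent) of the edge from `p` to `q` in realization `R`. -/
noncomputable def slope (T : ImpTerrain V) (R : V → ℝ) (p q : V) : ℝ :=
  (R p - R q) / T.hdist p q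

/-- `q` is a steepest-descent neighbor of `p` in `R`. -/
def SDN (T : ImpTerrain V) (R : V → ℝ) (p q : V) : Prop :=
  T.adj p q ∧ 0 ≤ T.slope R p q ∧ ∀ r, T.adj p r → T.slope R p r ≤ T.slope R p q

/-- The neighborhood of a set of nodes. -/
def Nbhd (T : ImpTerrain V) (P : Set V) : Set V :=
  {s | s ∉ P ∧ ∃ t ∈ P, T.adj s t}

/-- `u` and `v` are connected by a path staying inside `P`. -/
def ConnIn (T : ImpTerrain V) (P : Set V) (u v : V) : Prop :=
  Relation.ReflTransGen (fun a b => T.adj a b ∧ a ∈ P ∧ b ∈ P) u v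

/-- `P` is a local minimum in realization `R`: nonempty, connected, all nodes at
the same elevation, strictly below its neighborhood. -/
def LocalMin (T : ImpTerrain V) (R : V → ℝ) (P : Set V) : Prop :=
  P.Nonempty ∧ (∀ u ∈ P, ∀ v ∈ P, T.ConnIn P u v) ∧
    (∀ u ∈ P, ∀ v ∈ P, R u = R v) ∧ (∀ u ∈ P, ∀ t ∈ T.Nbhd P, R u < R t)

def InLocalMin (T : ImpTerrain V) (R : V → ℝ) (p : V) : Prop :=
  ∃ P, T.LocalMin R P ∧ p ∈ P

/-- One step of discrete water flow. -/
def FlowStep (T : ImpTerrain V) (R : V → ℝ) (p q : V) : Prop :=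
  (∃ P, T.LocalMin R P ∧ p ∈ P ∧ q ∈ P ∧ T.adj p q) ∨
    (¬ T.InLocalMin R p ∧ T.SDN R p q)

/-- `p ⇝_R q` : water from `p` reaches `q` in realization `R`. -/
def FlowsTo (T : ImpTerrain V) (R : V → ℝ) : V → V → Prop :=
  Relation.ReflTransGen (T.FlowStep R)

/-- The (discrete) watershed of a set of nodes `Q` in realization `R`. -/
def WS (T : ImpTerrain V) (R : V → ℝ) (Q : Set V) : Set V :=
  {p | ∃ q ∈ Q, T.FlowsTo R p q}

/-- The potential watershed of `Q`. -/
def PoWS (T : ImpTerrain V) (Q : Set V) : Set V :=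
  {p | ∃ R, T.IsRealization R ∧ p ∈ T.WS R Q}

/-- A flow path: a simple path following steepest-descent edges that ends in,
and visits all nodes of, a local minimum. -/
def IsFlowPath (T : ImpTerrain V) (R : V → ℝ) (L : List V) : Prop :=
  L.Nodup ∧ L.Chain' (fun p q => T.SDN R p q) ∧
    ∃ P, T.LocalMin R P ∧ (∀ v ∈ P, v ∈ L) ∧ ∃ hne : L ≠ [], L.getLast hne ∈ P

/-- The `Q`-avoiding potential watershed of `S`: nodes having, in some
realization, a flow path to a node of `S` whose portion up to that node
avoids `Q`. -/
def AvWS (T : ImpTerrain V) (Q S : Set V) : Set V :=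
  {p | ∃ R, T.IsRealization R ∧ ∃ L, T.IsFlowPath R L ∧ ∃ s ∈ S,
    ∃ i j : Fin L.length, (i : ℕ) ≤ (j : ℕ) ∧ L.get i = p ∧ L.get j = s ∧
      ∀ k : Fin L.length, (i : ℕ) ≤ (k : ℕ) → (k : ℕ) ≤ (j : ℕ) → L.get k ∉ Q}

/-- The persistent watershed of `Q`. -/
def PsWS (T : ImpTerrain V) (Q : Set V) : Set V :=
  (T.AvWS Q (T.PoWS Q)ᶜ)ᶜ

/-- The core watershed of `Q`: nodes from which every induced flow path leads
to a node of `Q`. -/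
def CoWS (T : ImpTerrain V) (Q : Set V) : Set V :=
  {p | ∀ R, T.IsRealization R → ∀ L, T.IsFlowPath R L →
    ∀ i : Fin L.length, L.get i = p →
      ∃ q ∈ Q, ∃ j : Fin L.length, (i : ℕ) ≤ (j : ℕ) ∧ L.get j = q}

/-- Union of all node sets disjoint from `Q` that form a local minimum in some
realization. -/
def Vmin (T : ImpTerrain V) (Q : Set V) : Set V :=
  ⋃₀ {r | r ∩ Q = ∅ ∧ ∃ R, T.IsRealization R ∧ T.LocalMin R r}

/-- `S` contains a local minimum in every realization. -/
def AlwaysMin (T : ImpTerrain V) (S : Set V) : Prop :=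
  ∀ R, T.IsRealization R → ∃ P, T.LocalMin R P ∧ P ⊆ S

/-- An imprecise minimum: a minimal set containing a local minimum in every
realization. -/
def ImpreciseMin (T : ImpTerrain V) (S : Set V) : Prop :=
  T.AlwaysMin S ∧ ∀ S', S' ⊂ S → ¬ T.AlwaysMin S'

/-- A terrain is regular if every local minimum of the lowermost realization is
an imprecise minimum. -/
def Regular (T : ImpTerrain V) : Prop :=
  ∀ P, T.LocalMin T.low P → T.ImpreciseMin P

/-- A proxy of `S`: a node of `S` from which water can never reach a node
outside `S` in any realization. -/
def IsProxy (T : ImpTerrain V) (S : Set V) (p : V) : Prop :=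
  p ∈ S ∧ ∀ R, T.IsRealization R → ∀ q, q ∉ S → ¬ T.FlowsTo R p q

/-- `R'` is an `ε`-perturbation of `R`. -/
def Perturb (ε : ℝ) (R R' : V → ℝ) : Prop := ∀ v, |R' v - R v| ≤ ε

/-- `S` together with all `ε`-perturbations of its members (`S^ε`). -/
def Enlarge (S : Set (V → ℝ)) (ε : ℝ) : Set (V → ℝ) :=
  S ∪ {R' | ∃ R ∈ S, Perturb ε R R'}

/-- `Π(S)` : flow paths induced by realizations in `S`. -/
def FlowPathsOf (T : ImpTerrain V) (S : Set (V → ℝ)) : Set (List V) :=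
  {L | ∃ R ∈ S, T.IsFlowPath R L}

/-- A flow path is stable with respect to `S`. -/
def StableWrt (T : ImpTerrain V) (S : Set (V → ℝ)) (L : List V) : Prop :=
  ∃ ε > (0 : ℝ), ∃ R ∈ S, ∀ R', Perturb ε R R' → T.IsFlowPath R' L

/-- State of the sweep-plane minimum-removal algorithm. -/
structure SweepState (V : Type) where
  discovered : Set V
  final : V → Option ℝ
  proxies : Set V

def pendingS (st : SweepState V) (v : V) : Prop :=
  v ∈ st.discovered ∧ st.final v = none

/-- Pending component of `v`. -/
def pendComp (T : ImpTerrain V) (st : SweepState V) (v : V) : Set V :=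
  {u | Relation.ReflTransGen (fun a b => T.adj a b ∧ pendingS st a ∧ pendingS st b) v u}

/-- One step of the sweep algorithm, processing a `low` event `(v, false)` or a
`high` event `(v, true)`. -/
noncomputable def sweepStep (T : ImpTerrain V) (st : SweepState V) : V × Bool → SweepState V
  | (v, false) =>
    let st1 : SweepState V := ⟨insert v st.discovered, st.final, st.proxies⟩
    if ∃ u, T.adj v u ∧ (st.final u).isSome = true then
      ⟨st1.discovered,
        fun w => if w ∈ T.pendComp st1 v then some (T.low v) else st.final w,
        st.proxies⟩
    else st1
  | (v, true) =>
    if (st.final v).isSome = true then st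
    else
      ⟨st.discovered,
        fun w =>
          if w ∈ T.pendComp st v then some (sSup (T.low '' T.pendComp st v))
          else st.final w,
        insert v st.proxies⟩

noncomputable def sweepRun (T : ImpTerrain V) (evs : List (V × Bool)) : SweepState V :=
  evs.foldl T.sweepStep ⟨∅, fun _ => none, ∅⟩

/-- Elevation key of an event. -/
def eKey (T : ImpTerrain V) : V × Bool → ℝ
  | (v, false) => T.low v
  | (v, true) => T.high v

/-- A valid event list: all events, each once, sorted by elevation with low
events before high events at equal elevation. -/
def ValidEventList (T : ImpTerrain V) (evs : List (V × Bool)) : Prop :=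
  (∀ v : V, ∀ b : Bool, (v, b) ∈ evs) ∧ evs.Nodup ∧
    evs.Pairwise (fun e1 e2 =>
      T.eKey e1 < T.eKey e2 ∨ (T.eKey e1 = T.eKey e2 ∧ ¬(e1.2 = true ∧ e2.2 = false)))

/-- The realization `M` computed by the sweep algorithm. -/
noncomputable def sweepM (T : ImpTerrain V) (evs : List (V × Bool)) : V → ℝ :=
  fun v => ((T.sweepRun evs).final v).getD (T.high v)

end ImpTerrain

section AuxLemmas

open ImpTerrain List

variable {V : Type} [Fintype V] [DecidableEq V] (T : ImpTerrain V)

lemma aux_adj_ne {u v : V} (h : T.adj u v) : u ≠ v := by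
  rintro rfl; exact T.adj_irrefl u h

lemma aux_hdist_pos {u v : V} (h : T.adj u v) : 0 < T.hdist u v := by
  rw [ImpTerrain.hdist, dist_pos]
  exact fun hc => aux_adj_ne T h (T.posInj hc)

lemma aux_slope_nonneg_iff {R : V → ℝ} {u v : V} (h : T.adj u v) :
    0 ≤ T.slope R u v ↔ R v ≤ R u := by
  rw [ImpTerrain.slope, le_div_iff₀ (aux_hdist_pos T h), zero_mul, sub_nonneg]

lemma aux_slope_pos_iff {R : V → ℝ} {u v : V} (h : T.adj u v) :
    0 < T.slope R u v ↔ R v < R u := by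
  rw [ImpTerrain.slope, lt_div_iff₀ (aux_hdist_pos T h), zero_mul, sub_pos]

lemma aux_slope_le_iff {R R' : V → ℝ} {u v : V} (h : T.adj u v) :
    T.slope R u v ≤ T.slope R' u v ↔ R u - R v ≤ R' u - R' v := by
  rw [ImpTerrain.slope, ImpTerrain.slope, div_le_div_iff_of_pos_right (aux_hdist_pos T h)]

lemma aux_slope_lt_iff {R R' : V → ℝ} {u v : V} (h : T.adj u v) :
    T.slope R u v < T.slope R' u v ↔ R u - R v < R' u - R' v := by
  rw [ImpTerrain.slope, ImpTerrain.slope, div_lt_div_iff_of_pos_right (aux_hdist_pos T h)]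

lemma aux_flowStep_props {R : V → ℝ} {u v : V} (h : T.FlowStep R u v) :
    T.adj u v ∧ 0 ≤ T.slope R u v ∧ ∀ r, T.adj u r → T.slope R u r ≤ T.slope R u v := by
  rcases h with ⟨P, hP, hu, hv, hadj⟩ | ⟨_, hadj, h0, hmax⟩
  · have heq : R u = R v := hP.2.2.1 u hu v hv
    have hs : T.slope R u v = 0 := by
      rw [ImpTerrain.slope, heq, sub_self, zero_div]
    refine ⟨hadj, by rw [hs], ?_⟩
    intro r hr
    by_cases hrP : r ∈ P
    · have heq2 : R u = R r := hP.2.2.1 u hu r hrP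
      rw [hs, ImpTerrain.slope, heq2, sub_self, zero_div]
    · have hrN : r ∈ T.Nbhd P := ⟨hrP, u, hu, T.adj_symm u r hr⟩
      have hlt : R u < R r := hP.2.2.2 u hu r hrN
      rw [hs, ImpTerrain.slope]
      apply div_nonpos_of_nonpos_of_nonneg (by linarith) (aux_hdist_pos T hr).le
  · exact ⟨hadj, h0, hmax⟩

end AuxLemmas

section AuxLemmas2

open ImpTerrain List

variable {V : Type} [Fintype V] [DecidableEq V] (T : ImpTerrain V)

lemma aux_flowStep_of_max {R : V → ℝ} {u v : V} (hadj : T.adj u v)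
    (h0 : 0 ≤ T.slope R u v) (hmax : ∀ r, T.adj u r → T.slope R u r ≤ T.slope R u v) :
    T.FlowStep R u v := by
  by_cases hL : T.InLocalMin R u
  · obtain ⟨P, hP, huP⟩ := hL
    by_cases hvP : v ∈ P
    · exact Or.inl ⟨P, hP, huP, hvP, hadj⟩
    · exfalso
      have hvN : v ∈ T.Nbhd P := ⟨hvP, u, huP, T.adj_symm u v hadj⟩
      have h2 : R u < R v := hP.2.2.2 u huP v hvN
      rw [aux_slope_nonneg_iff T hadj] at h0
      linarith
  · exact Or.inr ⟨hL, hadj, h0, hmax⟩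

lemma aux_step_main {R' RS : V → ℝ} {u v : V}
    (h1 : R' u = RS u) (hst : T.FlowStep RS u v) (h2 : R' v ≤ RS v) :
    ∃ y, T.FlowStep R' u y ∧ R' y ≤ R' u ∧ (y = v ∨ (R' y < R' u ∧ R' y < RS y)) := by
  obtain ⟨hadj, h0, hmax⟩ := aux_flowStep_props T hst
  have hsv : T.slope RS u v ≤ T.slope R' u v := by
    rw [aux_slope_le_iff T hadj, h1]
    linarith
  have h0' : 0 ≤ T.slope R' u v := le_trans h0 hsv
  by_cases hc : ∀ r, T.adj u r → T.slope R' u r ≤ T.slope R' u v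
  · refine ⟨v, aux_flowStep_of_max T hadj h0' hc, ?_, Or.inl rfl⟩
    rw [aux_slope_nonneg_iff T hadj] at h0'
    exact h0'
  · push_neg at hc
    obtain ⟨r₀, hr₀, hgt⟩ := hc
    have hne : (Finset.univ.filter (fun r => T.adj u r)).Nonempty :=
      ⟨r₀, by simp [hr₀]⟩
    obtain ⟨y, hy, hymax⟩ := Finset.exists_max_image _ (fun r => T.slope R' u r) hne
    simp only [Finset.mem_filter, Finset.mem_univ, true_and] at hy
    have hymax' : ∀ r, T.adj u r → T.slope R' u r ≤ T.slope R' u y := by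
      intro r hr; exact hymax r (by simp [hr])
    have hyv : T.slope R' u v < T.slope R' u y := lt_of_lt_of_le hgt (hymax' r₀ hr₀)
    have hy0 : 0 < T.slope R' u y := lt_of_le_of_lt h0' hyv
    have hstep := aux_flowStep_of_max T hy hy0.le hymax'
    have hlt : R' y < R' u := (aux_slope_pos_iff T hy).mp hy0
    have hlt2 : R' y < RS y := by
      have ha : T.slope RS u y ≤ T.slope RS u v := hmax y hy
      have hb : T.slope RS u y < T.slope R' u y := lt_of_le_of_lt (le_trans ha hsv) hyv
      rw [aux_slope_lt_iff T hy, h1] at hb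
      linarith
    exact ⟨y, hstep, hlt.le, Or.inr ⟨hlt, hlt2⟩⟩

lemma aux_chain_suffix {r : V → V → Prop} :
    ∀ (l : List V) (a x : V), List.Chain r a l → x ∈ a :: l →
      ∃ l', List.Chain r x l' ∧
        (x :: l').getLast (List.cons_ne_nil _ _) = (a :: l).getLast (List.cons_ne_nil _ _) ∧
        ∀ z ∈ x :: l', z ∈ a :: l := by
  intro l
  induction l with
  | nil =>
    intro a x _ hx
    simp only [List.mem_singleton] at hx
    subst hx
    exact ⟨[], List.Chain.nil, rfl, fun z hz => hz⟩
  | cons b l ih =>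
    intro a x hch hx
    rw [List.Chain, List.isChain_cons_cons] at hch
    rcases List.mem_cons.mp hx with rfl | hx'
    · exact ⟨b :: l, List.chain_cons.mpr hch, rfl, fun z hz => hz⟩
    · obtain ⟨l', h1, h2, h3⟩ := ih b x hch.2 hx'
      refine ⟨l', h1, ?_, fun z hz => List.mem_cons_of_mem _ (h3 z hz)⟩
      rw [h2, List.getLast_cons_cons]

end AuxLemmas2


set_option maxHeartbeats 1000000 in
/-- For any set of nodes `Q` there is a single (canonical) realization whose
watershed of `Q` equals the potential watershed of `Q`. -/
theorem stmt1 {V : Type} [Fintype V] [DecidableEq V] (T : ImpTerrain V)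
    (hle : ∀ v, T.low v ≤ T.high v) (Q : Set V) :
    ∃ Rbar, T.IsRealization Rbar ∧ T.WS Rbar Q = T.PoWS Q := by
  classical
  -- the set of achievable watershed cardinalities
  set S : Set ℕ := {n | ∃ R, T.IsRealization R ∧ (T.WS R Q).ncard = n} with hS
  have hSne : S.Nonempty := ⟨_, T.low, fun v => ⟨le_refl _, hle v⟩, rfl⟩
  have hSbdd : BddAbove S := by
    refine ⟨Fintype.card V, ?_⟩
    rintro n ⟨R, _, rfl⟩
    calc (T.WS R Q).ncard ≤ (Set.univ : Set V).ncard :=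
          Set.ncard_le_ncard (Set.subset_univ _) (Set.toFinite _)
      _ = Fintype.card V := by rw [Set.ncard_univ, Nat.card_eq_fintype_card]
  obtain ⟨RB, hRB, hRBcard⟩ := Nat.sSup_mem hSne hSbdd
  have hmaxx : ∀ R, T.IsRealization R → (T.WS R Q).ncard ≤ sSup S := by
    intro R hR; exact le_csSup hSbdd ⟨R, hR, rfl⟩
  refine ⟨RB, hRB, ?_⟩
  apply Set.Subset.antisymm
  · intro x hx; exact ⟨RB, hRB, hx⟩
  -- hard direction
  intro w hwPo
  by_contra hwA
  obtain ⟨RW, hRW, hwWS⟩ := hwPo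
  obtain ⟨q0, hq0, hfl⟩ := hwWS
  obtain ⟨l₀, hch0, hlast0⟩ := List.exists_isChain_cons_of_relationReflTransGen hfl
  set A : Set V := T.WS RB Q with hA
  set L : List V := w :: l₀ with hLdef
  have hQlast : (w :: l₀).getLast (List.cons_ne_nil _ _) ∈ Q := by rw [hlast0]; exact hq0
  set R' : V → ℝ := fun v =>
    if v ∈ L then (if v ∈ A then min (RB v) (RW v) else RW v)
    else (if v ∈ A then RB v else T.high v) with hR'def
  have hF1 : T.IsRealization R' := by
    intro v
    rw [hR'def]
    dsimp only
    split_ifs with h1 h2 h3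
    · exact ⟨le_min (hRB v).1 (hRW v).1, le_trans (min_le_left _ _) (hRB v).2⟩
    · exact hRW v
    · exact hRB v
    · exact ⟨hle v, le_refl _⟩
  have hF2 : ∀ v ∈ L, R' v ≤ RW v := by
    intro v hv
    rw [hR'def]; dsimp only
    rw [if_pos hv]
    split_ifs
    · exact min_le_right _ _
    · exact le_refl _
  have hF3 : ∀ v ∈ A, R' v ≤ RB v := by
    intro v hv
    rw [hR'def]; dsimp only
    split_ifs with h1
    · exact min_le_left _ _
    · exact le_refl _
  have hF4 : ∀ v, R' v < RB v → v ∈ L ∧ R' v = RW v := by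
    intro v hlt
    rw [hR'def] at hlt ⊢
    dsimp only at hlt ⊢
    by_cases h1 : v ∈ L
    · refine ⟨h1, ?_⟩
      rw [if_pos h1] at hlt ⊢
      by_cases h2 : v ∈ A
      · rw [if_pos h2] at hlt ⊢
        rcases min_choice (RB v) (RW v) with h | h
        · rw [h] at hlt; exact absurd hlt (lt_irrefl _)
        · exact h
      · rw [if_neg h2]
    · exfalso
      rw [if_neg h1] at hlt
      by_cases h2 : v ∈ A
      · rw [if_pos h2] at hlt; exact absurd hlt (lt_irrefl _)
      · rw [if_neg h2] at hlt; exact absurd hlt (not_lt.mpr (hRB v).2)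
  have hF5 : ∀ v, R' v < RW v → v ∈ A ∧ R' v = RB v := by
    intro v hlt
    rw [hR'def] at hlt ⊢
    dsimp only at hlt ⊢
    by_cases h1 : v ∈ L
    · rw [if_pos h1] at hlt ⊢
      by_cases h2 : v ∈ A
      · refine ⟨h2, ?_⟩
        rw [if_pos h2] at hlt ⊢
        rcases min_choice (RB v) (RW v) with h | h
        · exact h
        · rw [h] at hlt; exact absurd hlt (lt_irrefl _)
      · rw [if_neg h2] at hlt; exact absurd hlt (lt_irrefl _)
    · rw [if_neg h1] at hlt ⊢
      by_cases h2 : v ∈ A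
      · rw [if_pos h2] at hlt ⊢; exact ⟨h2, rfl⟩
      · rw [if_neg h2] at hlt; exact absurd hlt (not_lt.mpr (hRW v).2)
  have hwL : w ∈ L := by rw [hLdef]; exact List.mem_cons_self
  have hR'w : R' w = RW w := by
    rw [hR'def]; dsimp only
    rw [if_pos hwL, if_neg hwA]
  -- the rank function
  set μ : V → ℕ := fun u => (Finset.univ.filter (fun x => R' x < R' u)).card with hμdef
  have hμlt : ∀ {y u : V}, R' y < R' u → μ y < μ u := by
    intro y u hyu
    rw [hμdef]
    apply Finset.card_lt_card
    rw [Finset.ssubset_iff_of_subset]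
    · exact ⟨y, by simp [hyu], by simp⟩
    · intro x hx
      simp only [Finset.mem_filter, Finset.mem_univ, true_and] at hx ⊢
      exact lt_trans hx hyu
  have hμle : ∀ {y u : V}, R' y ≤ R' u → μ y ≤ μ u := by
    intro y u hyu
    apply Finset.card_le_card
    intro x hx
    simp only [Finset.mem_filter, Finset.mem_univ, true_and] at hx ⊢
    exact lt_of_lt_of_le hx hyu
  have hT'step : ∀ {u y : V}, T.FlowStep R' u y → y ∈ T.WS R' Q → u ∈ T.WS R' Q := by
    rintro u y hs ⟨q, hq, hf⟩
    exact ⟨q, hq, Relation.ReflTransGen.head hs hf⟩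
  have hT'Q : ∀ {q : V}, q ∈ Q → q ∈ T.WS R' Q := by
    intro q hq; exact ⟨q, hq, Relation.ReflTransGen.refl⟩
  -- the main induction
  have main : ∀ N u, μ u ≤ N →
      ((R' u = RB u → ∀ l, List.Chain (T.FlowStep RB) u l →
          (u :: l).getLast (List.cons_ne_nil _ _) ∈ Q → u ∈ T.WS R' Q) ∧
       (R' u = RW u → ∀ l, List.Chain (T.FlowStep RW) u l →
          (u :: l).getLast (List.cons_ne_nil _ _) ∈ Q → (∀ z ∈ u :: l, z ∈ L) →
          u ∈ T.WS R' Q)) := by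
    intro N
    induction N using Nat.strong_induction_on with
    | _ N IH =>
    have SA : ∀ l u, μ u ≤ N → R' u = RB u → List.Chain (T.FlowStep RB) u l →
        (u :: l).getLast (List.cons_ne_nil _ _) ∈ Q → u ∈ T.WS R' Q := by
      intro l
      induction l with
      | nil =>
        intro u _ _ _ hlast
        exact hT'Q (by simpa using hlast)
      | cons v l' ihSA =>
        intro u hμu hRu hch hlast
        rw [List.Chain, List.isChain_cons_cons] at hch
        obtain ⟨hst, hch'⟩ := hch
        rw [List.getLast_cons_cons] at hlast
        have hvA : v ∈ A :=
          ⟨_, hlast, List.relationReflTransGen_of_exists_isChain_cons l' hch' rfl⟩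
        have h2 : R' v ≤ RB v := hF3 v hvA
        obtain ⟨y, hyst, hyle, hyc⟩ := aux_step_main T hRu hst h2
        rcases hyc with hyv | ⟨hylt, hyRS⟩
        · -- retained step to v (y = v)
          rw [hyv] at hyst hyle
          by_cases hvB : R' v = RB v
          · exact hT'step hyst (ihSA v (le_trans (hμle hyle) hμu) hvB hch' hlast)
          · have hvlt : R' v < RB v := lt_of_le_of_ne h2 hvB
            obtain ⟨hvL, hvRW⟩ := hF4 v hvlt
            have hRBvu : RB v ≤ RB u := by
              obtain ⟨hadj, h0, _⟩ := aux_flowStep_props T hst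
              rw [aux_slope_nonneg_iff T hadj] at h0; exact h0
            have hstrict : R' v < R' u := by rw [hRu]; exact lt_of_lt_of_le hvlt hRBvu
            obtain ⟨l'', hc1, hc2, hc3⟩ := aux_chain_suffix l₀ w v hch0 hvL
            have hvWS := (IH (μ v) (lt_of_lt_of_le (hμlt hstrict) hμu) v (le_refl _)).2
              hvRW l'' hc1 (by rw [hc2]; exact hQlast) hc3
            exact hT'step hyst hvWS
        · -- redirected step to y
          obtain ⟨hyL, hyRW⟩ := hF4 y hyRS
          obtain ⟨l'', hc1, hc2, hc3⟩ := aux_chain_suffix l₀ w y hch0 hyL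
          have hyWS := (IH (μ y) (lt_of_lt_of_le (hμlt hylt) hμu) y (le_refl _)).2
            hyRW l'' hc1 (by rw [hc2]; exact hQlast) hc3
          exact hT'step hyst hyWS
    have SP : ∀ l u, μ u ≤ N → R' u = RW u → List.Chain (T.FlowStep RW) u l →
        (u :: l).getLast (List.cons_ne_nil _ _) ∈ Q → (∀ z ∈ u :: l, z ∈ L) →
        u ∈ T.WS R' Q := by
      intro l
      induction l with
      | nil =>
        intro u _ _ _ hlast _
        exact hT'Q (by simpa using hlast)
      | cons v l' ihSP =>
        intro u hμu hRu hch hlast hmem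
        rw [List.Chain, List.isChain_cons_cons] at hch
        obtain ⟨hst, hch'⟩ := hch
        rw [List.getLast_cons_cons] at hlast
        have hvL : v ∈ L := hmem v (by simp)
        have hmem' : ∀ z ∈ v :: l', z ∈ L := fun z hz => hmem z (List.mem_cons_of_mem _ hz)
        have h2 : R' v ≤ RW v := hF2 v hvL
        obtain ⟨y, hyst, hyle, hyc⟩ := aux_step_main T hRu hst h2
        rcases hyc with hyv | ⟨hylt, hyRS⟩
        · rw [hyv] at hyst hyle
          by_cases hvB : R' v = RW v
          · exact hT'step hyst (ihSP v (le_trans (hμle hyle) hμu) hvB hch' hlast hmem')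
          · have hvlt : R' v < RW v := lt_of_le_of_ne h2 hvB
            obtain ⟨hvA, hvRB⟩ := hF5 v hvlt
            obtain ⟨qv, hqv, hfv⟩ := hvA
            obtain ⟨lv, hlv1, hlv2⟩ := List.exists_isChain_cons_of_relationReflTransGen hfv
            exact hT'step hyst
              (SA lv v (le_trans (hμle hyle) hμu) hvRB hlv1 (by rw [hlv2]; exact hqv))
        · obtain ⟨hyA, hyRB⟩ := hF5 y hyRS
          obtain ⟨qy, hqy, hfy⟩ := hyA
          obtain ⟨ly, hly1, hly2⟩ := List.exists_isChain_cons_of_relationReflTransGen hfy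
          exact hT'step hyst
            (SA ly y (le_trans (le_of_lt (hμlt hylt)) hμu) hyRB hly1 (by rw [hly2]; exact hqy))
    intro u hμu
    constructor
    · intro hRu l hch hlast; exact SA l u hμu hRu hch hlast
    · intro hRu l hch hlast hmem; exact SP l u hμu hRu hch hlast hmem
  -- A ⊆ WS R' Q
  have hAsub : A ⊆ T.WS R' Q := by
    intro a haA
    by_cases haB : R' a = RB a
    · obtain ⟨qa, hqa, hfa⟩ := haA
      obtain ⟨la, h1, h2⟩ := List.exists_isChain_cons_of_relationReflTransGen hfa
      exact (main (μ a) a (le_refl _)).1 haB la h1 (by rw [h2]; exact hqa)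
    · have hlt : R' a < RB a := lt_of_le_of_ne (hF3 a haA) haB
      obtain ⟨haL, haRW⟩ := hF4 a hlt
      obtain ⟨l'', hc1, hc2, hc3⟩ := aux_chain_suffix l₀ w a hch0 haL
      exact (main (μ a) a (le_refl _)).2 haRW l'' hc1 (by rw [hc2]; exact hQlast) hc3
  have hwT' : w ∈ T.WS R' Q :=
    (main (μ w) w (le_refl _)).2 hR'w l₀ hch0 (by rw [hlast0]; exact hq0) (fun z hz => hz)
  -- contradiction with maximality
  have hsub : insert w A ⊆ T.WS R' Q := by
    intro x hx
    rcases Set.mem_insert_iff.mp hx with rfl | hxA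
    · exact hwT'
    · exact hAsub hxA
  have hcard : sSup S < (T.WS R' Q).ncard := by
    calc sSup S = A.ncard := hRBcard.symm
      _ < (insert w A).ncard := by
          rw [Set.ncard_insert_of_notMem hwA (Set.toFinite _)]; omega
      _ ≤ (T.WS R' Q).ncard := Set.ncard_le_ncard hsub (Set.toFinite _)
  exact absurd (hmaxx R' hF1) (not_le.mpr hcard)
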